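/- Formulas of the guarded fragment are invariant under guarded bisimulation: let Σ be a relational signature, φ(x₁,…,xₙ) a formula of the guarded fragment of first-order logic over Σ with free variables among x₁,…,xₙ, and let 𝔄 and 𝔅 be Σ-structures with guarded tuples ā = (a₁,…,aₙ) and b̄ = (b₁,…,bₙ) such that 𝔄,ā ∼_g 𝔅,b̄. Then 𝔄 ⊨ φ(a₁,…,aₙ) if and only if 𝔅 ⊨ φ(b₁,…,bₙ). -/

import Mathlib

open FirstOrder

namespace GFPaper

variable {L : FirstOrder.Language} {M N : Type*} {K V : Type*}

/-! ### Guarded sets, guarded tuples, partial isomorphisms, guarded bisimulations -/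

/-- A guarded set of a `Σ`-structure is a nonempty (finite) subset contained in the set of
components of some tuple belonging to some relation of the structure. -/
def IsGuardedSet (SM : L.Structure M) (B : Set M) : Prop :=
  B.Nonempty ∧ ∃ (n : ℕ) (R : L.Relations n) (a : Fin n → M),
    SM.RelMap R a ∧ B ⊆ Set.range a

/-- A guarded tuple is a tuple of pairwise distinct elements whose set of components is
a guarded set. -/
def IsGuardedTuple (SM : L.Structure M) {k : ℕ} (a : Fin k → M) : Prop :=
  Function.Injective a ∧ IsGuardedSet SM (Set.range a)

/-- A partial isomorphism between two `Σ`-structures: an injective map between finite subsets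
preserving and reflecting all atomic relations.  The function `toFun` is total, but only its
restriction to `dom` is meaningful. -/
structure PartialIso (SM : L.Structure M) (SN : L.Structure N) where
  dom : Set M
  finite_dom : dom.Finite
  toFun : M → N
  injOn : Set.InjOn toFun dom
  rel_iff : ∀ {n : ℕ} (R : L.Relations n) (a : Fin n → M), (∀ i, a i ∈ dom) →
    (SM.RelMap R a ↔ SN.RelMap R (fun i => toFun (a i)))

/-- The range of a partial isomorphism. -/
def PartialIso.rng {SM : L.Structure M} {SN : L.Structure N} (α : PartialIso SM SN) : Set N :=
  α.toFun '' α.dom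

/-- A guarded bisimulation between two `Σ`-structures: a nonempty family of partial
isomorphisms between finite subsets satisfying the back-and-forth conditions over guarded
sets. -/
structure GuardedBisim (SM : L.Structure M) (SN : L.Structure N) where
  Z : Set (PartialIso SM SN)
  nonempty : Z.Nonempty
  forth : ∀ α ∈ Z, ∀ B₀ : Set M, IsGuardedSet SM B₀ →
    ∃ γ ∈ Z, B₀ ⊆ γ.dom ∧ ∀ x ∈ α.dom ∩ γ.dom, α.toFun x = γ.toFun x
  back : ∀ α ∈ Z, ∀ B₁ : Set N, IsGuardedSet SN B₁ →
    ∃ γ ∈ Z, B₁ ⊆ γ.rng ∧ ∀ x ∈ α.dom, ∀ y ∈ γ.dom, α.toFun x = γ.toFun y → x = y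

/-- `𝔄₀,ā ∼_g 𝔄₁,b̄` : some guarded bisimulation contains the map `ā ↦ b̄`. -/
def GBisimTuple (SM : L.Structure M) (SN : L.Structure N) {k : ℕ}
    (a : Fin k → M) (b : Fin k → N) : Prop :=
  ∃ (Z : GuardedBisim SM SN) (α : PartialIso SM SN), α ∈ Z.Z ∧
    α.dom = Set.range a ∧ ∀ i, α.toFun (a i) = b i

/-- Guarded bisimilarity has finite index on the guarded tuples of a structure:
there is a finite set of guarded tuples such that every guarded tuple is guarded bisimilar
to one of them. -/
def FiniteGBisimIndex (SM : L.Structure M) : Prop :=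
  ∃ S : Set (Σ k : ℕ, Fin k → M), S.Finite ∧
    ∀ ⦃k : ℕ⦄ (a : Fin k → M), IsGuardedTuple SM a →
      ∃ b : Fin k → M, (⟨k, b⟩ : Σ k : ℕ, Fin k → M) ∈ S ∧
        IsGuardedTuple SM b ∧ GBisimTuple SM SM a b

/-! ### Undirected unraveling and undirected bisimulation -/

/-- `t` extends `s` by one edge (i.e. `s` is obtained from `t` by deleting its last node). -/
def ExtendsBy (G : SimpleGraph V) (v₀ : V) (s t : Σ u : V, G.Walk v₀ u) : Prop :=
  ∃ h : G.Adj s.1 t.1, t.2 = s.2.concat h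

/-- The undirected unraveling of a graph `G` from a node `v₀`: nodes are the finite walks
of `G` starting at `v₀`, and edges join each walk of positive length to the walk obtained
by deleting its last node. -/
def unraveling (G : SimpleGraph V) (v₀ : V) : SimpleGraph (Σ u : V, G.Walk v₀ u) where
  Adj s t := ExtendsBy G v₀ s t ∨ ExtendsBy G v₀ t s
  symm := ⟨fun _ _ h => Or.symm h⟩
  loopless := ⟨fun s h => by
    rcases h with ⟨h, _⟩ | ⟨h, _⟩ <;> exact G.loopless.irrefl s.1 h⟩

/-- The projection sending a node of the unraveling (a walk) to its terminal node. -/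
def unravelingProj (G : SimpleGraph V) (v₀ : V) : (Σ u : V, G.Walk v₀ u) → V :=
  fun s => s.1

/-- An undirected bisimulation between node-labelled undirected graphs. -/
def IsUndirectedBisim {V₀ V₁ Λ : Type*} (G₀ : SimpleGraph V₀) (G₁ : SimpleGraph V₁)
    (ℓ₀ : V₀ → Λ) (ℓ₁ : V₁ → Λ) (Z : Set (V₀ × V₁)) : Prop :=
  ∀ p ∈ Z, ℓ₀ p.1 = ℓ₁ p.2 ∧
    (∀ w₀, G₀.Adj p.1 w₀ → ∃ w₁, G₁.Adj p.2 w₁ ∧ (w₀, w₁) ∈ Z) ∧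
    (∀ w₁, G₁.Adj p.2 w₁ → ∃ w₀, G₀.Adj p.1 w₀ ∧ (w₀, w₁) ∈ Z)

/-! ### Tabloids -/

/-- A tabloid over a relational signature `L` and a set `K` of constant names: an undirected
graph where every node `v` carries a set `consts v ⊆ K` of constants and an atomic type
over `consts v`, encoded as the collection `rel v` of atomic facts over `consts v`; the
types of adjacent nodes agree over their common constants. -/
structure Tabloid (L : FirstOrder.Language) (K : Type*) (V : Type*) where
  graph : SimpleGraph V
  consts : V → Set K
  rel : ∀ (_v : V) {n : ℕ}, L.Relations n → (Fin n → K) → Prop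
  rel_mem : ∀ (v : V) {n : ℕ} (R : L.Relations n) (c : Fin n → K),
    rel v R c → ∀ i, c i ∈ consts v
  compat : ∀ (v w : V), graph.Adj v w → ∀ {n : ℕ} (R : L.Relations n) (c : Fin n → K),
    (∀ i, c i ∈ consts v ∩ consts w) → (rel v R c ↔ rel w R c)

namespace Tabloid

variable (T : Tabloid L K V)

/-- The pairs `(v, c)` with `v` a node and `c` one of its constants. -/
def Pairs : Type _ := {q : V × K // q.2 ∈ T.consts q.1}

/-- The relation `(v,c) ≈ (v',c')` iff `c = c'` and `c` belongs to the constants of every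
node on the (unique, when the tabloid is a tree) path connecting `v` and `v'`. -/
def keq (p q : T.Pairs) : Prop :=
  p.1.2 = q.1.2 ∧
    ∀ w : T.graph.Walk p.1.1 q.1.1, w.IsPath → ∀ z ∈ w.support, p.1.2 ∈ T.consts z

/-- The set of nodes `v` witnessing simultaneously the classes `[v_i, c_i]`, i.e. such that
`c_i ∈ K_v` and `[v, c_i] = [v_i, c_i]` for all `i`. -/
def classSet {n : ℕ} (p : Fin n → T.Pairs) : Set V :=
  {v | ∀ i, ∃ h : (p i).1.2 ∈ T.consts v,
    Quot.mk T.keq ⟨((v, (p i).1.2) : V × K), h⟩ = Quot.mk T.keq (p i)}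

/-- The structure `𝔄(T)` associated to a (tree) tabloid: the universe is the set of
`≈`-classes `[v,c]`, and a tuple satisfies a relation iff some single node witnesses all
classes and its atomic type contains the corresponding fact. -/
def AT [L.IsRelational] : L.Structure (Quot T.keq) where
  funMap := fun f _ => isEmptyElim f
  RelMap := fun {n} R x =>
    ∃ (v : V) (c : Fin n → K) (h : ∀ i, c i ∈ T.consts v),
      (∀ i, Quot.mk T.keq ⟨((v, c i) : V × K), h i⟩ = x i) ∧ T.rel v R c

/-- The undirected unraveling of a tabloid from a node: the unraveling of the underlying
graph, each walk carrying the labels of its terminal node. -/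
def unravel (v₀ : V) : Tabloid L K (Σ u : V, T.graph.Walk v₀ u) where
  graph := unraveling T.graph v₀
  consts := fun s => T.consts s.1
  rel := fun s => T.rel s.1
  rel_mem := fun s _ R c h i => T.rel_mem s.1 R c h i
  compat := by
    rintro s t hst n R c hc
    rcases (show ExtendsBy T.graph v₀ s t ∨ ExtendsBy T.graph v₀ t s from hst) with ⟨h, _⟩ | ⟨h, _⟩
    · exact T.compat s.1 t.1 h R c hc
    · exact (T.compat t.1 s.1 h R c (fun i => ⟨(hc i).2, (hc i).1⟩)).symm

/-- An isomorphism of a tabloid onto itself: a graph automorphism preserving both labels. -/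
structure Auto where
  toEquiv : V ≃ V
  adj_iff : ∀ z z', T.graph.Adj z z' ↔ T.graph.Adj (toEquiv z) (toEquiv z')
  consts_eq : ∀ z, T.consts (toEquiv z) = T.consts z
  rel_iff : ∀ (z : V) {n : ℕ} (R : L.Relations n) (c : Fin n → K),
    T.rel (toEquiv z) R c ↔ T.rel z R c

end Tabloid

/-! ### The tabloid built from a finite model -/

/-- `χ` is the graph of a function. -/
def IsFunGraph (χ : Set (M × K)) : Prop :=
  ∀ ⦃a b b'⦄, (a, b) ∈ χ → (a, b') ∈ χ → b = b'

/-- `χ` is the graph of an injective (partial) function. -/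
def IsInjGraph (χ : Set (M × K)) : Prop :=
  ∀ ⦃a a' b⦄, (a, b) ∈ χ → (a', b) ∈ χ → a = a'

/-- The vertices of the tabloid built from a structure: injections `χ : A → K` with `A`
a guarded set, encoded via their graphs. -/
def ChiVertex (SM : L.Structure M) (K : Type*) : Type _ :=
  {χ : Set (M × K) // IsFunGraph χ ∧ IsInjGraph χ ∧ IsGuardedSet SM {a | ∃ b, (a, b) ∈ χ}}

/-- The constants of the vertex `χ`: the range of `χ`. -/
def chiConsts {SM : L.Structure M} (χ : ChiVertex SM K) : Set K :=
  {b | ∃ a, (a, b) ∈ χ.1}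

/-- The atomic type of the vertex `χ`: the image under `χ` of the atomic type of its
domain in the structure. -/
def chiRel {SM : L.Structure M} (χ : ChiVertex SM K) {n : ℕ}
    (R : L.Relations n) (c : Fin n → K) : Prop :=
  ∃ a : Fin n → M, (∀ i, (a i, c i) ∈ χ.1) ∧ SM.RelMap R a

/-- Adjacency of vertices: `χ ∪ χ'` is an injective function (and `χ ≠ χ'`). -/
def chiAdj {SM : L.Structure M} (χ χ' : ChiVertex SM K) : Prop :=
  χ ≠ χ' ∧ IsFunGraph (χ.1 ∪ χ'.1) ∧ IsInjGraph (χ.1 ∪ χ'.1)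

/-! ### The guarded fragment of first-order logic -/

/-- Formulas of the guarded fragment of first-order logic over a relational signature `L`,
with variables drawn from `ℕ`: atomic formulas (including equalities), Boolean connectives,
and guarded quantification `∃ȳ (R(x̄ȳ) ∧ φ)` and `∀ȳ (R(x̄ȳ) → φ)`. -/
inductive GFormula (L : FirstOrder.Language) : Type _ where
  | equal : ℕ → ℕ → GFormula L
  | rel : ∀ {n : ℕ}, L.Relations n → (Fin n → ℕ) → GFormula L
  | not : GFormula L → GFormula L
  | and : GFormula L → GFormula L → GFormula L
  | or : GFormula L → GFormula L → GFormula L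
  | exGuard : ∀ {n : ℕ}, L.Relations n → (Fin n → ℕ) → Set ℕ → GFormula L → GFormula L
  | allGuard : ∀ {n : ℕ}, L.Relations n → (Fin n → ℕ) → Set ℕ → GFormula L → GFormula L

namespace GFormula

/-- The free variables of a formula. -/
def free : GFormula L → Set ℕ
  | equal i j => {i, j}
  | rel _ ts => Set.range ts
  | not φ => φ.free
  | and φ ψ => φ.free ∪ ψ.free
  | or φ ψ => φ.free ∪ ψ.free
  | exGuard _ ts ys φ => (Set.range ts ∪ φ.free) \ ys
  | allGuard _ ts ys φ => (Set.range ts ∪ φ.free) \ ys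

/-- Well-formedness for the guarded fragment: in every guarded quantification
`∃ȳ (R(x̄ȳ) ∧ φ)` resp. `∀ȳ (R(x̄ȳ) → φ)` the guard atom contains all free variables
of `φ` as well as all quantified variables. -/
def IsGF : GFormula L → Prop
  | equal _ _ => True
  | rel _ _ => True
  | not φ => φ.IsGF
  | and φ ψ => φ.IsGF ∧ ψ.IsGF
  | or φ ψ => φ.IsGF ∧ ψ.IsGF
  | exGuard _ ts ys φ => φ.free ⊆ Set.range ts ∧ ys ⊆ Set.range ts ∧ φ.IsGF
  | allGuard _ ts ys φ => φ.free ⊆ Set.range ts ∧ ys ⊆ Set.range ts ∧ φ.IsGF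

/-- Satisfaction of a guarded formula in a structure under a variable assignment. -/
def Sat (SM : L.Structure M) : GFormula L → (ℕ → M) → Prop
  | equal i j, β => β i = β j
  | rel R ts, β => SM.RelMap R (fun i => β (ts i))
  | not φ, β => ¬ Sat SM φ β
  | and φ ψ, β => Sat SM φ β ∧ Sat SM ψ β
  | or φ ψ, β => Sat SM φ β ∨ Sat SM ψ β
  | exGuard R ts ys φ, β => ∃ β' : ℕ → M, (∀ x ∉ ys, β' x = β x) ∧
      SM.RelMap R (fun i => β' (ts i)) ∧ Sat SM φ β'
  | allGuard R ts ys φ, β => ∀ β' : ℕ → M, (∀ x ∉ ys, β' x = β x) →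
      SM.RelMap R (fun i => β' (ts i)) → Sat SM φ β'

/-- Every subformula of `φ` has at most `n` free variables. -/
def WidthLE (n : ℕ) : GFormula L → Prop
  | equal i j => (({i, j} : Set ℕ)).ncard ≤ n
  | rel _ ts => (Set.range ts).ncard ≤ n
  | not φ => φ.WidthLE n
  | and φ ψ => (φ.free ∪ ψ.free).ncard ≤ n ∧ φ.WidthLE n ∧ ψ.WidthLE n
  | or φ ψ => (φ.free ∪ ψ.free).ncard ≤ n ∧ φ.WidthLE n ∧ ψ.WidthLE n
  | exGuard _ ts _ φ => (Set.range ts ∪ φ.free).ncard ≤ n ∧ φ.WidthLE n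
  | allGuard _ ts _ φ => (Set.range ts ∪ φ.free).ncard ≤ n ∧ φ.WidthLE n

end GFormula


section InvarianceProof

variable {SM : L.Structure M} {SN : L.Structure N}

/-- Forth step: transfer a witness assignment from `M` to `N`. -/
lemma step_forth (Z : GuardedBisim SM SN) (α : PartialIso SM SN) (hα : α ∈ Z.Z)
    {n : ℕ} (R : L.Relations n) (ts : Fin n → ℕ) (ys : Set ℕ)
    (β : ℕ → M) (β' : ℕ → N)
    (hrel : ∀ x, x ∈ Set.range ts → x ∉ ys → β x ∈ α.dom ∧ β' x = α.toFun (β x))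
    (β₀ : ℕ → M) (hβ₀ : ∀ x ∉ ys, β₀ x = β x)
    (hR : SM.RelMap R (fun i => β₀ (ts i))) :
    ∃ γ ∈ Z.Z, ∃ β₀' : ℕ → N,
      (∀ x ∉ ys, β₀' x = β' x) ∧ SN.RelMap R (fun i => β₀' (ts i)) ∧
      (∀ x ∈ Set.range ts, β₀ x ∈ γ.dom ∧ β₀' x = γ.toFun (β₀ x)) := by
  classical
  rcases isEmpty_or_nonempty (Fin n) with hfin | hfin
  · refine ⟨α, hα, β', fun _ _ => rfl, ?_, ?_⟩
    · have h1 : SN.RelMap R (fun i => α.toFun (β₀ (ts i))) :=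
        (α.rel_iff R _ (fun i => isEmptyElim i)).mp hR
      have h2 : (fun i => β' (ts i)) = (fun i : Fin n => α.toFun (β₀ (ts i))) :=
        funext fun i => isEmptyElim i
      rw [h2]; exact h1
    · rintro x ⟨i, rfl⟩; exact isEmptyElim i
  · have hguard : IsGuardedSet SM (Set.range (fun i => β₀ (ts i))) :=
      ⟨Set.range_nonempty _, n, R, _, hR, subset_rfl⟩
    obtain ⟨γ, hγ, hsub, hagree⟩ := Z.forth α hα _ hguard
    have hdom : ∀ x ∈ Set.range ts, β₀ x ∈ γ.dom := by
      rintro x ⟨i, rfl⟩; exact hsub ⟨i, rfl⟩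
    refine ⟨γ, hγ, fun x => if x ∈ Set.range ts then γ.toFun (β₀ x) else β' x,
      ?_, ?_, ?_⟩
    · intro x hx
      by_cases hxr : x ∈ Set.range ts
      · simp only [if_pos hxr]
        obtain ⟨hd, he⟩ := hrel x hxr hx
        have hb : β₀ x = β x := hβ₀ x hx
        have hg : β x ∈ γ.dom := hb ▸ hdom x hxr
        rw [hb, he]
        exact (hagree (β x) ⟨hd, hg⟩).symm
      · simp only [if_neg hxr]
    · have h1 : SN.RelMap R (fun i => γ.toFun (β₀ (ts i))) :=
        (γ.rel_iff R _ (fun i => hdom _ ⟨i, rfl⟩)).mp hR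
      have h2 : (fun i => if ts i ∈ Set.range ts then γ.toFun (β₀ (ts i)) else β' (ts i))
          = (fun i : Fin n => γ.toFun (β₀ (ts i))) :=
        funext fun i => if_pos ⟨i, rfl⟩
      rw [h2]; exact h1
    · intro x hx
      simp only [if_pos hx]
      exact ⟨hdom x hx, trivial⟩

/-- Back step: transfer a witness assignment from `N` to `M`. -/
lemma step_back (Z : GuardedBisim SM SN) (α : PartialIso SM SN) (hα : α ∈ Z.Z)
    {n : ℕ} (R : L.Relations n) (ts : Fin n → ℕ) (ys : Set ℕ)
    (β : ℕ → M) (β' : ℕ → N)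
    (hrel : ∀ x, x ∈ Set.range ts → x ∉ ys → β x ∈ α.dom ∧ β' x = α.toFun (β x))
    (β₀' : ℕ → N) (hβ₀' : ∀ x ∉ ys, β₀' x = β' x)
    (hR : SN.RelMap R (fun i => β₀' (ts i))) :
    ∃ γ ∈ Z.Z, ∃ β₀ : ℕ → M,
      (∀ x ∉ ys, β₀ x = β x) ∧ SM.RelMap R (fun i => β₀ (ts i)) ∧
      (∀ x ∈ Set.range ts, β₀ x ∈ γ.dom ∧ β₀' x = γ.toFun (β₀ x)) := by
  classical
  rcases isEmpty_or_nonempty (Fin n) with hfin | hfin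
  · refine ⟨α, hα, β, fun _ _ => rfl, ?_, ?_⟩
    · have h1 : SN.RelMap R (fun i => α.toFun (β (ts i))) := by
        have h2 : (fun i => β₀' (ts i)) = (fun i : Fin n => α.toFun (β (ts i))) :=
          funext fun i => isEmptyElim i
        rw [← h2]; exact hR
      exact (α.rel_iff R _ (fun i => isEmptyElim i)).mpr h1
    · rintro x ⟨i, rfl⟩; exact isEmptyElim i
  · have hguard : IsGuardedSet SN (Set.range (fun i => β₀' (ts i))) :=
      ⟨Set.range_nonempty _, n, R, _, hR, subset_rfl⟩
    obtain ⟨γ, hγ, hsub, hinj⟩ := Z.back α hα _ hguard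
    have key : ∀ x ∈ Set.range ts, ∃ y ∈ γ.dom, γ.toFun y = β₀' x := by
      rintro x ⟨i, rfl⟩
      rcases hsub ⟨i, rfl⟩ with ⟨y, hy, hyy⟩
      exact ⟨y, hy, hyy⟩
    refine ⟨γ, hγ, fun x => if h : x ∈ Set.range ts then (key x h).choose else β x,
      ?_, ?_, ?_⟩
    · intro x hx
      by_cases hxr : x ∈ Set.range ts
      · simp only [dif_pos hxr]
        obtain ⟨hy, hyy⟩ := (key x hxr).choose_spec
        obtain ⟨hd, he⟩ := hrel x hxr hx
        refine (hinj (β x) hd _ hy ?_).symm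
        rw [← he, ← hβ₀' x hx, hyy]
      · simp only [dif_neg hxr]
    · have hdom : ∀ i : Fin n, (if h : ts i ∈ Set.range ts then (key (ts i) h).choose
          else β (ts i)) ∈ γ.dom := by
        intro i
        rw [dif_pos ⟨i, rfl⟩]
        exact ((key (ts i) ⟨i, rfl⟩).choose_spec).1
      refine (γ.rel_iff R _ hdom).mpr ?_
      have h2 : (fun i => γ.toFun (if h : ts i ∈ Set.range ts then (key (ts i) h).choose
          else β (ts i))) = (fun i : Fin n => β₀' (ts i)) := by
        funext i
        rw [dif_pos ⟨i, rfl⟩]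
        exact ((key (ts i) ⟨i, rfl⟩).choose_spec).2
      rw [h2]; exact hR
    · intro x hx
      simp only [dif_pos hx]
      obtain ⟨hy, hyy⟩ := (key x hx).choose_spec
      exact ⟨hy, hyy.symm⟩

/-- The main invariance lemma: satisfaction of a guarded formula transfers along any
partial isomorphism in a guarded bisimulation whose domain covers the free variables. -/
lemma sat_iff_of_gbisim (Z : GuardedBisim SM SN) (φ : GFormula L) :
    φ.IsGF → ∀ α ∈ Z.Z, ∀ (β : ℕ → M) (β' : ℕ → N),
      (∀ x ∈ φ.free, β x ∈ α.dom ∧ β' x = α.toFun (β x)) →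
      (GFormula.Sat SM φ β ↔ GFormula.Sat SN φ β') := by
  induction φ with
  | equal i j =>
    intro _ α _ β β' h
    obtain ⟨hdi, hei⟩ := h i (Or.inl rfl)
    obtain ⟨hdj, hej⟩ := h j (Or.inr rfl)
    simp only [GFormula.Sat]
    constructor
    · intro hij; rw [hei, hej, hij]
    · intro hij
      exact α.injOn hdi hdj (by rw [← hei, ← hej, hij])
  | rel R ts =>
    intro _ α _ β β' h
    simp only [GFormula.Sat]
    have hdom : ∀ i, β (ts i) ∈ α.dom := fun i => (h (ts i) ⟨i, rfl⟩).1
    have h2 : (fun i => β' (ts i)) = (fun i => α.toFun (β (ts i))) :=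
      funext fun i => (h (ts i) ⟨i, rfl⟩).2
    rw [h2]
    exact α.rel_iff R _ hdom
  | not φ ih =>
    intro hgf α hα β β' h
    simp only [GFormula.Sat]
    exact not_congr (ih hgf α hα β β' h)
  | and φ ψ ihφ ihψ =>
    intro hgf α hα β β' h
    simp only [GFormula.Sat]
    exact and_congr (ihφ hgf.1 α hα β β' (fun x hx => h x (Or.inl hx)))
      (ihψ hgf.2 α hα β β' (fun x hx => h x (Or.inr hx)))
  | or φ ψ ihφ ihψ =>
    intro hgf α hα β β' h
    simp only [GFormula.Sat]
    exact or_congr (ihφ hgf.1 α hα β β' (fun x hx => h x (Or.inl hx)))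
      (ihψ hgf.2 α hα β β' (fun x hx => h x (Or.inr hx)))
  | exGuard R ts ys φ ih =>
    intro hgf α hα β β' h
    obtain ⟨hsub, hys, hφ⟩ := hgf
    have hrel : ∀ x, x ∈ Set.range ts → x ∉ ys →
        β x ∈ α.dom ∧ β' x = α.toFun (β x) :=
      fun x hx hxy => h x ⟨Or.inl hx, hxy⟩
    simp only [GFormula.Sat]
    constructor
    · rintro ⟨β₀, h1, h2, h3⟩
      obtain ⟨γ, hγ, β₀', p1, p2, p3⟩ :=
        step_forth Z α hα R ts ys β β' hrel β₀ h1 h2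
      exact ⟨β₀', p1, p2,
        (ih hφ γ hγ β₀ β₀' (fun x hx => p3 x (hsub hx))).mp h3⟩
    · rintro ⟨β₀', h1, h2, h3⟩
      obtain ⟨γ, hγ, β₀, p1, p2, p3⟩ :=
        step_back Z α hα R ts ys β β' hrel β₀' h1 h2
      exact ⟨β₀, p1, p2,
        (ih hφ γ hγ β₀ β₀' (fun x hx => p3 x (hsub hx))).mpr h3⟩
  | allGuard R ts ys φ ih =>
    intro hgf α hα β β' h
    obtain ⟨hsub, hys, hφ⟩ := hgf
    have hrel : ∀ x, x ∈ Set.range ts → x ∉ ys →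
        β x ∈ α.dom ∧ β' x = α.toFun (β x) :=
      fun x hx hxy => h x ⟨Or.inl hx, hxy⟩
    simp only [GFormula.Sat]
    constructor
    · intro H β₀' h1 h2
      obtain ⟨γ, hγ, β₀, p1, p2, p3⟩ :=
        step_back Z α hα R ts ys β β' hrel β₀' h1 h2
      exact (ih hφ γ hγ β₀ β₀' (fun x hx => p3 x (hsub hx))).mp (H β₀ p1 p2)
    · intro H β₀ h1 h2
      obtain ⟨γ, hγ, β₀', p1, p2, p3⟩ :=
        step_forth Z α hα R ts ys β β' hrel β₀ h1 h2
      exact (ih hφ γ hγ β₀ β₀' (fun x hx => p3 x (hsub hx))).mpr (H β₀' p1 p2)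

end InvarianceProof

/-- Formulas of the guarded fragment are invariant under guarded
bisimulation: if `𝔄,ā ∼_g 𝔅,b̄` for guarded tuples `ā`, `b̄`, then for every guarded
formula `φ(x₁,…,xₙ)`, `𝔄 ⊨ φ(ā)` iff `𝔅 ⊨ φ(b̄)`. -/
theorem gf_invariant_under_gbisim {L : FirstOrder.Language} [L.IsRelational]
    {M N : Type*} (SM : L.Structure M) (SN : L.Structure N)
    (φ : GFormula L) (hφ : φ.IsGF) (n : ℕ) (hfree : ∀ x ∈ φ.free, x < n)
    (a : Fin n → M) (b : Fin n → N)
    (ha : IsGuardedTuple SM a) (hb : IsGuardedTuple SN b)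
    (hab : GBisimTuple SM SN a b)
    (β : ℕ → M) (β' : ℕ → N)
    (hβ : ∀ i : Fin n, β i.1 = a i) (hβ' : ∀ i : Fin n, β' i.1 = b i) :
    GFormula.Sat SM φ β ↔ GFormula.Sat SN φ β' := by
  obtain ⟨Z, α, hα, hdom, htf⟩ := hab
  refine sat_iff_of_gbisim Z φ hφ α hα β β' (fun x hx => ?_)
  have hxn : x < n := hfree x hx
  have h1 : β x = a ⟨x, hxn⟩ := hβ ⟨x, hxn⟩
  have h2 : β' x = b ⟨x, hxn⟩ := hβ' ⟨x, hxn⟩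
  constructor
  · rw [h1, hdom]; exact ⟨⟨x, hxn⟩, rfl⟩
  · rw [h1, h2, htf ⟨x, hxn⟩]

end GFPaper
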